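/- Let k be a nonnegative integer, let m be a positive integer, and let r be an integer with 1 − p_{k+1} ≤ r ≤ m − p_{k+1}. Then there exists an integer n ≥ p_{k+1} such that n + r = m·(π(n) − k), i.e., (n + r)/(π(n) − k) = m. -/

import Mathlib

open Nat Filter

lemma sum_primesBelow_tendsto :
    Tendsto (fun N : ℕ => ∑ p ∈ N.primesBelow, (1 : ℝ) / p) atTop atTop := by
  have h := not_summable_one_div_on_primes
  rw [not_summable_iff_tendsto_nat_atTop_of_nonneg
    (fun n => Set.indicator_nonneg (fun p _ => by positivity) n)] at h
  convert h using 2 with N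
  unfold Nat.primesBelow
  rw [Finset.sum_filter]
  exact Finset.sum_congr rfl fun i _ => by
    by_cases hi : i.Prime <;> simp [Set.indicator_apply, hi]

lemma totient_prod_primes (s : Finset ℕ) (hs : ∀ p ∈ s, p.Prime) :
    Nat.totient (∏ p ∈ s, p) = ∏ p ∈ s, (p - 1) := by
  classical
  induction s using Finset.induction with
  | empty => simp
  | @insert a s ha ih =>
      have hap : a.Prime := hs a (Finset.mem_insert_self a s)
      have hco : Nat.Coprime a (∏ p ∈ s, p) :=
        Nat.Coprime.prod_right fun q hq =>
          (Nat.coprime_primes hap (hs q (Finset.mem_insert_of_mem hq))).mpr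
            (fun h => ha (h ▸ hq))
      rw [Finset.prod_insert ha, Finset.prod_insert ha, Nat.totient_mul hco,
        Nat.totient_prime hap, ih (fun p hp => hs p (Finset.mem_insert_of_mem hp))]

lemma totient_le_exp (N : ℕ) :
    (Nat.totient (∏ p ∈ N.primesBelow, p) : ℝ) ≤
      (∏ p ∈ N.primesBelow, p : ℕ) * Real.exp (-∑ p ∈ N.primesBelow, (1 : ℝ) / p) := by
  rw [totient_prod_primes _ (fun p hp => Nat.prime_of_mem_primesBelow hp)]
  rw [← Finset.sum_neg_distrib, Real.exp_sum, Nat.cast_prod, Nat.cast_prod,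
    ← Finset.prod_mul_distrib]
  refine Finset.prod_le_prod (fun p hp => by positivity) (fun p hp => ?_)
  have hp2 : 1 ≤ p := (Nat.prime_of_mem_primesBelow hp).one_lt.le
  rw [Nat.cast_sub hp2, Nat.cast_one]
  have hp1 : (1:ℝ) ≤ p := by exact_mod_cast hp2
  have hp0 : (0:ℝ) < p := by linarith
  have h := Real.add_one_le_exp (-(1 : ℝ) / p)
  have h2 := mul_le_mul_of_nonneg_left h hp0.le
  have h3 : (p : ℝ) * (-(1:ℝ)/p + 1) = p - 1 := by field_simp; ring
  rw [h3] at h2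
  rw [show -(1/(p:ℝ)) = -(1:ℝ)/p from (neg_div _ _).symm]
  exact h2

lemma exists_sparse (m C n0 : ℕ) (hm : 0 < m) :
    ∃ n : ℕ, n0 ≤ n ∧ m * n.primeCounting + C ≤ n := by
  obtain ⟨N, hN⟩ := (sum_primesBelow_tendsto.eventually_gt_atTop (Real.log (2 * m))).exists
  set a := ∏ p ∈ N.primesBelow, p with ha_def
  have ha : 0 < a :=
    Finset.prod_pos fun p hp => (Nat.prime_of_mem_primesBelow hp).pos
  have h2m : 2 * m * Nat.totient a ≤ a := by
    have hexp : Real.exp (-∑ p ∈ N.primesBelow, (1 : ℝ) / p) < 1 / (2 * m) := by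
      rw [Real.exp_neg]
      rw [one_div]
      refine inv_strictAnti₀ (by positivity) ?_
      calc (2 * m : ℝ) = Real.exp (Real.log (2 * m)) := by
            rw [Real.exp_log (by positivity)]
      _ < Real.exp _ := Real.exp_lt_exp.mpr hN
    have h1 : (2 * m * Nat.totient a : ℝ) < a := by
      calc (2 * m * Nat.totient a : ℝ)
          ≤ 2 * m * ((a : ℝ) * Real.exp (-∑ p ∈ N.primesBelow, (1 : ℝ) / p)) := by
            have := totient_le_exp N
            rw [← ha_def] at this
            have h2 : (0:ℝ) ≤ 2 * m := by positivity
            exact mul_le_mul_of_nonneg_left this h2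
      _ < 2 * m * ((a : ℝ) * (1 / (2 * m))) := by
            have ha' : (0:ℝ) < a := by exact_mod_cast ha
            have : (0:ℝ) < 2 * m := by positivity
            apply mul_lt_mul_of_pos_left _ this
            exact mul_lt_mul_of_pos_left hexp ha'
      _ = a := by field_simp
    exact_mod_cast h1.le
  set K := Nat.primeCounting' (a + 1) with hK
  set t := n0 + 2 * m * K + 2 * C with ht
  refine ⟨a * (t + 1), ?_, ?_⟩
  · calc n0 ≤ t + 1 := by omega
    _ = 1 * (t + 1) := (one_mul _).symm
    _ ≤ a * (t + 1) := Nat.mul_le_mul_right _ ha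
  · have hb : Nat.primeCounting (a * (t + 1)) ≤ K + Nat.totient a * (t + 1) := by
      have h := Nat.primeCounting'_add_le ha.ne' (lt_add_one a) (a * t)
      rw [Nat.mul_div_cancel_left t ha] at h
      have he : a * (t + 1) + 1 = a + 1 + a * t := by ring
      rw [Nat.primeCounting, he]
      exact h
    have h3 : 2 * m * (Nat.totient a * (t + 1)) ≤ a * (t + 1) := by
      calc 2 * m * (Nat.totient a * (t + 1)) = 2 * m * Nat.totient a * (t + 1) := by ring
      _ ≤ a * (t + 1) := Nat.mul_le_mul_right _ h2m
    have h4 : t + 1 ≤ a * (t + 1) := by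
      calc t + 1 = 1 * (t + 1) := (one_mul _).symm
      _ ≤ a * (t + 1) := Nat.mul_le_mul_right _ ha
    have hX : m * Nat.primeCounting (a * (t + 1)) ≤ m * K + m * (Nat.totient a * (t + 1)) := by
      calc m * Nat.primeCounting (a * (t + 1)) ≤ m * (K + Nat.totient a * (t + 1)) :=
            Nat.mul_le_mul_left m hb
      _ = m * K + m * (Nat.totient a * (t + 1)) := by ring
    have hZ : 2 * (m * (Nat.totient a * (t + 1))) ≤ a * (t + 1) := by
      calc 2 * (m * (Nat.totient a * (t + 1))) = 2 * m * (Nat.totient a * (t + 1)) := by ring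
      _ ≤ a * (t + 1) := h3
    have ht' : n0 + 2 * (m * K) + 2 * C = t := by rw [ht]; ring
    omega

/-- The k-th prime, 1-indexed: `nthPrime 1 = 2`. -/
noncomputable def nthPrime (k : ℕ) : ℕ := Nat.nth Nat.Prime (k - 1)

/-- `IsS m S` says that `S` is the maximum of `{k*m - p_k : k ≥ 1}`. -/
def IsS (m : ℕ) (S : ℤ) : Prop :=
  IsGreatest {a : ℤ | ∃ k : ℕ, 0 < k ∧ a = (k : ℤ) * m - nthPrime k} S

theorem stmt15 (k m : ℕ) (hm : 0 < m) (r : ℤ)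
    (h1 : 1 - (nthPrime (k + 1) : ℤ) ≤ r) (h2 : r ≤ (m : ℤ) - nthPrime (k + 1)) :
    ∃ n : ℕ, nthPrime (k + 1) ≤ n ∧
      (n : ℤ) + r = (m : ℤ) * ((Nat.primeCounting n : ℤ) - k) := by
  classical
  set n0 := nthPrime (k + 1) with hn0
  have hn0eq : n0 = Nat.nth Nat.Prime k := by simp [hn0, nthPrime]
  have hpi0 : Nat.primeCounting n0 = k + 1 := by
    rw [hn0eq, Nat.primeCounting, Nat.primeCounting', Nat.count_succ,
      if_pos (Nat.prime_nth_prime k), Nat.count_nth_of_infinite Nat.infinite_setOf_prime]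
  set F : ℕ → ℤ := fun n => (m : ℤ) * (Nat.primeCounting n : ℤ) - m * k - n with hF
  obtain ⟨n1, hn1ge, hn1⟩ := exists_sparse m (n0 + m * k) n0 hm
  have hF1 : F n1 < r := by
    have : (m * Nat.primeCounting n1 + (n0 + m * k) : ℤ) ≤ n1 := by exact_mod_cast hn1
    have hn0r : 1 - (n0 : ℤ) ≤ r := h1
    simp only [hF]
    push_cast at this ⊢
    have hmk : (0:ℤ) ≤ (m:ℤ) * (k:ℤ) := by positivity
    linarith
  have hP : ∃ j, n0 ≤ j ∧ F j < r := ⟨n1, hn1ge, hF1⟩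
  set b := Nat.find hP with hb
  obtain ⟨hbge, hbF⟩ := Nat.find_spec hP
  rw [← hb] at hbge hbF
  have hFn0 : F n0 = (m : ℤ) - n0 := by
    simp only [hF, hpi0]; push_cast; ring
  have hbne : b ≠ n0 := by
    intro h
    rw [h, hFn0] at hbF
    linarith
  have hblt : n0 < b := lt_of_le_of_ne hbge (Ne.symm hbne)
  set c := b - 1 with hc
  have hcb : c + 1 = b := by omega
  have hcge : n0 ≤ c := by omega
  have hFc : ¬ F c < r := by
    have := Nat.find_min hP (show c < b by omega)
    tauto
  push_neg at hFc
  have hmono : Nat.primeCounting c ≤ Nat.primeCounting (c + 1) :=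
    Nat.monotone_primeCounting (Nat.le_succ c)
  have hstep : F c - 1 ≤ F (c + 1) := by
    simp only [hF]
    have : (m : ℤ) * (Nat.primeCounting c : ℤ) ≤ m * (Nat.primeCounting (c + 1) : ℤ) := by
      have hm' : (0 : ℤ) ≤ m := by positivity
      exact mul_le_mul_of_nonneg_left (by exact_mod_cast hmono) hm'
    push_cast
    linarith
  have hFb : F (c + 1) < r := by rwa [hcb]
  have hFceq : F c = r := le_antisymm (by linarith) hFc
  refine ⟨c, hcge, ?_⟩
  have hexp : (m : ℤ) * ((Nat.primeCounting c : ℤ) - k) =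
      m * (Nat.primeCounting c : ℤ) - m * k := by ring
  rw [hexp]
  simp only [hF] at hFceq
  linarith
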